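/- Let H be a real Hilbert space, 𝓗 ⊆ H dense with its own Hilbert norm, and let a : 𝓗 × 𝓗 → ℝ be a bounded bilinear form (representing a bounded operator Ĥ : 𝓗 → 𝓗'). Define the bivariational quotient 𝓔(ψ, ψ') := a(ψ', ψ)/⟨ψ', ψ⟩ on the set where ⟨ψ', ψ⟩ ≠ 0. Then 𝓔 is continuously differentiable there, and D_ψ 𝓔(ψ, ψ') = 0 and D_{ψ'} 𝓔(ψ, ψ') = 0 hold simultaneously if and only if there is E ∈ ℝ with a(φ, ψ) = E⟨φ, ψ⟩ for all φ ∈ 𝓗 (right eigenvector equation) and a(ψ', φ) = E⟨ψ', φ⟩ for all φ ∈ 𝓗 (left eigenvector equation), with E = 𝓔(ψ, ψ'). -/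

import Mathlib

open scoped RealInnerProductSpace

lemma key_fderiv {X : Type*} [NormedAddCommGroup X] [NormedSpace ℝ X]
    (L1 L2 : X →L[ℝ] ℝ) (ψ : X) (h : L2 ψ ≠ 0) :
    fderiv ℝ (fun φ => L1 φ / L2 φ) ψ = 0 ↔ ∀ v, L1 v = (L1 ψ / L2 ψ) * L2 v := by
  have hinv : HasFDerivAt (fun φ => (L2 φ)⁻¹)
      ((-ContinuousLinearMap.mulLeftRight ℝ ℝ (L2 ψ)⁻¹ (L2 ψ)⁻¹).comp L2) ψ :=
    (hasFDerivAt_inv' h).comp ψ L2.hasFDerivAt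
  have hmul : HasFDerivAt (fun φ => L1 φ * (L2 φ)⁻¹)
      (L1 ψ • ((-ContinuousLinearMap.mulLeftRight ℝ ℝ (L2 ψ)⁻¹ (L2 ψ)⁻¹).comp L2)
        + (L2 ψ)⁻¹ • L1) ψ := L1.hasFDerivAt.mul hinv
  have hdiv : HasFDerivAt (fun φ => L1 φ / L2 φ)
      (L1 ψ • ((-ContinuousLinearMap.mulLeftRight ℝ ℝ (L2 ψ)⁻¹ (L2 ψ)⁻¹).comp L2)
        + (L2 ψ)⁻¹ • L1) ψ := by
    simpa [div_eq_mul_inv] using hmul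
  rw [hdiv.fderiv]
  rw [ContinuousLinearMap.ext_iff]
  refine forall_congr' fun v => ?_
  simp only [ContinuousLinearMap.add_apply, ContinuousLinearMap.smul_apply,
    ContinuousLinearMap.comp_apply, ContinuousLinearMap.neg_apply,
    ContinuousLinearMap.mulLeftRight_apply, ContinuousLinearMap.zero_apply, smul_eq_mul]
  constructor
  · intro hv
    field_simp at hv ⊢
    have h2 : L2 ψ * (L1 v * L2 ψ) = L2 ψ * (L1 ψ * L2 v) := by linear_combination L2 ψ * hv
    have h3 := mul_left_cancel₀ h h2
    linear_combination h3
  · intro hv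
    rw [hv]
    field_simp
    ring

theorem stmt13 {X H : Type*} [NormedAddCommGroup X] [InnerProductSpace ℝ X]
    [NormedAddCommGroup H] [InnerProductSpace ℝ H]
    (a : X →L[ℝ] X →L[ℝ] ℝ) (ι : X →L[ℝ] H) (hinj : Function.Injective ι)
    (hdense : DenseRange ι) :
    ContDiffOn ℝ 1 (fun p : X × X => a p.2 p.1 / ⟪ι p.2, ι p.1⟫)
      {p : X × X | ⟪ι p.2, ι p.1⟫ ≠ 0} ∧
    ∀ ψ ψ' : X, ⟪ι ψ', ι ψ⟫ ≠ 0 →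
      ((fderiv ℝ (fun φ : X => a ψ' φ / ⟪ι ψ', ι φ⟫) ψ = 0 ∧
        fderiv ℝ (fun φ : X => a φ ψ / ⟪ι φ, ι ψ⟫) ψ' = 0) ↔
       ∃ E : ℝ, (∀ φ : X, a φ ψ = E * ⟪ι φ, ι ψ⟫) ∧
         (∀ φ : X, a ψ' φ = E * ⟪ι ψ', ι φ⟫) ∧
         E = a ψ' ψ / ⟪ι ψ', ι ψ⟫) := by
  constructor
  · -- C¹ on the set
    have hnum : ContDiff ℝ 1 fun p : X × X => a p.2 p.1 :=
      (a.flip.isBoundedBilinearMap.contDiff (n := 1)).comp (contDiff_fst.prodMk contDiff_snd)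
    have hden : ContDiff ℝ 1 fun p : X × X => ⟪ι p.2, ι p.1⟫ := by
      have h1 : ContDiff ℝ 1 fun p : X × X => (ι p.2, ι p.1) :=
        (ι.contDiff.comp contDiff_snd).prodMk (ι.contDiff.comp contDiff_fst)
      exact (contDiff_inner (𝕜 := ℝ) (E := H) (n := 1)).comp h1
    exact ContDiffOn.div hnum.contDiffOn hden.contDiffOn (fun p hp => hp)
  · intro ψ ψ' hne
    set L2 : X →L[ℝ] ℝ := ((innerSL ℝ (ι ψ')).comp ι) with hL2
    set L2' : X →L[ℝ] ℝ := (((innerSL ℝ).flip (ι ψ)).comp ι) with hL2'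
    have e1 : (fun φ : X => a ψ' φ / ⟪ι ψ', ι φ⟫) = fun φ => a ψ' φ / L2 φ := rfl
    have e2 : (fun φ : X => a φ ψ / ⟪ι φ, ι ψ⟫) = fun φ => a.flip ψ φ / L2' φ := rfl
    rw [e1, e2, key_fderiv (a ψ') L2 ψ hne, key_fderiv (a.flip ψ) L2' ψ' hne]
    constructor
    · rintro ⟨h1, h2⟩
      exact ⟨a ψ' ψ / ⟪ι ψ', ι ψ⟫, fun φ => h2 φ, fun φ => h1 φ, rfl⟩
    · rintro ⟨E, hR, hL, hE⟩
      constructor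
      · intro v
        show a ψ' v = (a ψ' ψ / ⟪ι ψ', ι ψ⟫) * ⟪ι ψ', ι v⟫
        rw [← hE]; exact hL v
      · intro v
        show a v ψ = (a ψ' ψ / ⟪ι ψ', ι ψ⟫) * ⟪ι v, ι ψ⟫
        rw [← hE]; exact hR v
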